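/- Let k be a field, A and B unital associative k-algebras, and ξ : A ⊗ B → B ⊗ A a linear map with ξ(1_A ⊗ b) = b ⊗ 1_A and ξ(a ⊗ 1_B) = 1_B ⊗ a. Let σ_Ass(A) : A ⊗ A → A ⊗ A be a ⊗ a' ↦ 1_A ⊗ aa' and σ_Ass(B) : B ⊗ B → B ⊗ B be b ⊗ b' ↦ 1_B ⊗ bb'. Then: (i) the colored Yang–Baxter equation (ξ ⊗ id_A)∘(id_A ⊗ ξ)∘(σ_Ass(A) ⊗ id_B) = (id_B ⊗ σ_Ass(A))∘(ξ ⊗ id_A)∘(id_A ⊗ ξ) on A ⊗ A ⊗ B holds if and only if ξ∘(μ_A ⊗ id_B) = (id_B ⊗ μ_A)∘(ξ ⊗ id_A)∘(id_A ⊗ ξ); and (ii) the colored Yang–Baxter equation (σ_Ass(B) ⊗ id_A)∘(id_B ⊗ ξ)∘(ξ ⊗ id_B) = (id_B ⊗ ξ)∘(ξ ⊗ id_B)∘(id_A ⊗ σ_Ass(B)) on A ⊗ B ⊗ B holds if and only if ξ∘(id_A ⊗ μ_B) = (μ_B ⊗ id_A)∘(id_B ⊗ ξ)∘(ξ ⊗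 id_B). -/

import Mathlib

open TensorProduct

set_option synthInstance.maxHeartbeats 400000
set_option maxHeartbeats 1000000

variable (k : Type*) [Field k]

/-- The colored Yang–Baxter equation on `X ⊗ Y ⊗ Z`. -/
def ColoredYBE (X Y Z : Type*) [AddCommGroup X] [Module k X] [AddCommGroup Y] [Module k Y]
    [AddCommGroup Z] [Module k Z]
    (cXY : X ⊗[k] Y →ₗ[k] Y ⊗[k] X) (cXZ : X ⊗[k] Z →ₗ[k] Z ⊗[k] X)
    (cYZ : Y ⊗[k] Z →ₗ[k] Z ⊗[k] Y) : Prop :=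
  (TensorProduct.assoc k Z Y X).toLinearMap
      ∘ₗ (cYZ.rTensor X)
      ∘ₗ (TensorProduct.assoc k Y Z X).symm.toLinearMap
      ∘ₗ (cXZ.lTensor Y)
      ∘ₗ (TensorProduct.assoc k Y X Z).toLinearMap
      ∘ₗ (cXY.rTensor Z)
      ∘ₗ (TensorProduct.assoc k X Y Z).symm.toLinearMap
    = (cXY.lTensor Z)
      ∘ₗ (TensorProduct.assoc k Z X Y).toLinearMap
      ∘ₗ (cXZ.rTensor Y)
      ∘ₗ (TensorProduct.assoc k X Z Y).symm.toLinearMap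
      ∘ₗ (cYZ.lTensor X)

/-- Naturality of `ξ : P ⊗ Q → Q ⊗ P` with respect to a multiplication `μP` on `P`. -/
def NatFirst {P Q : Type*} [AddCommGroup P] [Module k P] [AddCommGroup Q] [Module k Q]
    (μP : P ⊗[k] P →ₗ[k] P) (ξ : P ⊗[k] Q →ₗ[k] Q ⊗[k] P) : Prop :=
  ξ ∘ₗ (μP.rTensor Q) ∘ₗ (TensorProduct.assoc k P P Q).symm.toLinearMap
    = (μP.lTensor Q)
      ∘ₗ (TensorProduct.assoc k Q P P).toLinearMap
      ∘ₗ (ξ.rTensor P)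
      ∘ₗ (TensorProduct.assoc k P Q P).symm.toLinearMap
      ∘ₗ (ξ.lTensor P)

/-- Naturality of `ξ : P ⊗ Q → Q ⊗ P` with respect to a multiplication `μQ` on `Q`. -/
def NatSecond {P Q : Type*} [AddCommGroup P] [Module k P] [AddCommGroup Q] [Module k Q]
    (μQ : Q ⊗[k] Q →ₗ[k] Q) (ξ : P ⊗[k] Q →ₗ[k] Q ⊗[k] P) : Prop :=
  ξ ∘ₗ (μQ.lTensor P)
    = (μQ.rTensor P)
      ∘ₗ (TensorProduct.assoc k Q Q P).symm.toLinearMap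
      ∘ₗ (ξ.lTensor Q)
      ∘ₗ (TensorProduct.assoc k Q P Q).toLinearMap
      ∘ₗ (ξ.rTensor Q)
      ∘ₗ (TensorProduct.assoc k P Q Q).symm.toLinearMap

private lemma cancel_left {R M N P : Type*} [CommRing R] [AddCommGroup M] [Module R M]
    [AddCommGroup N] [Module R N] [AddCommGroup P] [Module R P]
    (j : M →ₗ[R] N) (r : N →ₗ[R] M) (hrj : r ∘ₗ j = LinearMap.id)
    (f g : P →ₗ[R] M) : j ∘ₗ f = j ∘ₗ g ↔ f = g := by
  constructor
  · intro h
    have h2 := congrArg (fun m => r ∘ₗ m) h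
    simpa [← LinearMap.comp_assoc, hrj] using h2
  · rintro rfl; rfl

private lemma aux1 {k : Type*} [Field k] {A B : Type*} [Ring A] [Algebra k A]
    [Ring B] [Algebra k B] (ξ : A ⊗[k] B →ₗ[k] B ⊗[k] A)
    (hξB : ∀ b : B, ξ ((1 : A) ⊗ₜ[k] b) = b ⊗ₜ[k] (1 : A))
    (y : B ⊗[k] A) :
    (TensorProduct.assoc k B A A) ((ξ.rTensor A)
        ((TensorProduct.assoc k A B A).symm ((1 : A) ⊗ₜ[k] y)))
      = (LinearMap.lTensor B (TensorProduct.mk k A A 1)) y := by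
  induction y using TensorProduct.induction_on with
  | zero => simp only [tmul_zero, map_zero]
  | tmul b a => simp [hξB]
  | add x y hx hy => simp [tmul_add, hx, hy]

/-- The mixed colored Yang–Baxter equations on `A ⊗ A ⊗ B` and on `A ⊗ B ⊗ B`, where on the
diagonal components one puts the associativity braidings `σ_Ass(A) : a ⊗ a' ↦ 1 ⊗ aa'` and
`σ_Ass(B) : b ⊗ b' ↦ 1 ⊗ bb'`, are respectively equivalent to the naturality of `ξ` with
respect to `μ_A` and to `μ_B`. -/
theorem mixed_ybe_iff_naturality
    (A B : Type*) [Ring A] [Algebra k A] [Ring B] [Algebra k B]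
    (ξ : A ⊗[k] B →ₗ[k] B ⊗[k] A)
    (hξB : ∀ b : B, ξ ((1 : A) ⊗ₜ[k] b) = b ⊗ₜ[k] (1 : A))
    (hξA : ∀ a : A, ξ (a ⊗ₜ[k] (1 : B)) = (1 : B) ⊗ₜ[k] a) :
    (ColoredYBE k A A B
        ((TensorProduct.mk k A A 1) ∘ₗ (LinearMap.mul' k A)) ξ ξ
      ↔ NatFirst k (LinearMap.mul' k A) ξ)
    ∧ (ColoredYBE k A B B
        ξ ξ ((TensorProduct.mk k B B 1) ∘ₗ (LinearMap.mul' k B))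
      ↔ NatSecond k (LinearMap.mul' k B) ξ) := by
  constructor
  · -- first half
    set j : B ⊗[k] A →ₗ[k] B ⊗[k] (A ⊗[k] A) :=
      LinearMap.lTensor B (TensorProduct.mk k A A 1) with hj
    set r : B ⊗[k] (A ⊗[k] A) →ₗ[k] B ⊗[k] A :=
      LinearMap.lTensor B (LinearMap.mul' k A) with hr
    have hrj : r ∘ₗ j = LinearMap.id := by
      apply TensorProduct.ext'
      intro b a
      simp [hj, hr]
    have hL : (TensorProduct.assoc k B A A).toLinearMap
          ∘ₗ (ξ.rTensor A)
          ∘ₗ (TensorProduct.assoc k A B A).symm.toLinearMap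
          ∘ₗ (ξ.lTensor A)
          ∘ₗ (TensorProduct.assoc k A A B).toLinearMap
          ∘ₗ (((TensorProduct.mk k A A 1) ∘ₗ (LinearMap.mul' k A)).rTensor B)
          ∘ₗ (TensorProduct.assoc k A A B).symm.toLinearMap
        = j ∘ₗ (ξ ∘ₗ ((LinearMap.mul' k A).rTensor B)
            ∘ₗ (TensorProduct.assoc k A A B).symm.toLinearMap) := by
      apply TensorProduct.ext'
      intro a y
      induction y using TensorProduct.induction_on with
      | zero => simp only [tmul_zero, map_zero]
      | tmul a' b =>
        simp only [LinearMap.comp_apply, LinearEquiv.coe_coe, assoc_symm_tmul,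
          LinearMap.rTensor_tmul, LinearMap.lTensor_tmul, assoc_tmul, mk_apply,
          LinearMap.mul'_apply]
        exact aux1 ξ hξB (ξ ((a * a') ⊗ₜ[k] b))
      | add x y hx hy => simp only [tmul_add, map_add, hx, hy]
    have hR : (((TensorProduct.mk k A A 1) ∘ₗ (LinearMap.mul' k A)).lTensor B)
          ∘ₗ (TensorProduct.assoc k B A A).toLinearMap
          ∘ₗ (ξ.rTensor A)
          ∘ₗ (TensorProduct.assoc k A B A).symm.toLinearMap
          ∘ₗ (ξ.lTensor A)
        = j ∘ₗ ((LinearMap.mul' k A).lTensor B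
            ∘ₗ (TensorProduct.assoc k B A A).toLinearMap
            ∘ₗ (ξ.rTensor A)
            ∘ₗ (TensorProduct.assoc k A B A).symm.toLinearMap
            ∘ₗ (ξ.lTensor A)) := by
      rw [LinearMap.lTensor_comp]
      simp only [LinearMap.comp_assoc, hj]
    rw [ColoredYBE, NatFirst, hL, hR]
    exact cancel_left j r hrj _ _
  · -- second half
    set j : B ⊗[k] A →ₗ[k] B ⊗[k] (B ⊗[k] A) :=
      TensorProduct.mk k B (B ⊗[k] A) 1 with hj
    set r : B ⊗[k] (B ⊗[k] A) →ₗ[k] B ⊗[k] A :=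
      ((LinearMap.mul' k B).rTensor A) ∘ₗ (TensorProduct.assoc k B B A).symm.toLinearMap
        with hr
    have hrj : r ∘ₗ j = LinearMap.id := by
      apply TensorProduct.ext'
      intro b a
      simp [hj, hr]
    have hmk : (TensorProduct.assoc k B B A).toLinearMap
          ∘ₗ ((TensorProduct.mk k B B 1).rTensor A) = j := by
      apply TensorProduct.ext'
      intro b a
      simp [hj]
    have hL : (TensorProduct.assoc k B B A).toLinearMap
          ∘ₗ (((TensorProduct.mk k B B 1) ∘ₗ (LinearMap.mul' k B)).rTensor A)
          ∘ₗ (TensorProduct.assoc k B B A).symm.toLinearMap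
          ∘ₗ (ξ.lTensor B)
          ∘ₗ (TensorProduct.assoc k B A B).toLinearMap
          ∘ₗ (ξ.rTensor B)
          ∘ₗ (TensorProduct.assoc k A B B).symm.toLinearMap
        = j ∘ₗ (((LinearMap.mul' k B).rTensor A)
            ∘ₗ (TensorProduct.assoc k B B A).symm.toLinearMap
            ∘ₗ (ξ.lTensor B)
            ∘ₗ (TensorProduct.assoc k B A B).toLinearMap
            ∘ₗ (ξ.rTensor B)
            ∘ₗ (TensorProduct.assoc k A B B).symm.toLinearMap) := by
      rw [LinearMap.rTensor_comp, ← hmk]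
      simp only [LinearMap.comp_assoc]
    have hR : (ξ.lTensor B)
          ∘ₗ (TensorProduct.assoc k B A B).toLinearMap
          ∘ₗ (ξ.rTensor B)
          ∘ₗ (TensorProduct.assoc k A B B).symm.toLinearMap
          ∘ₗ (((TensorProduct.mk k B B 1) ∘ₗ (LinearMap.mul' k B)).lTensor A)
        = j ∘ₗ (ξ ∘ₗ ((LinearMap.mul' k B).lTensor A)) := by
      apply TensorProduct.ext'
      intro a y
      induction y using TensorProduct.induction_on with
      | zero => simp only [tmul_zero, map_zero]
      | tmul b b' =>
        simp only [LinearMap.comp_apply, LinearEquiv.coe_coe, assoc_symm_tmul,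
          LinearMap.rTensor_tmul, LinearMap.lTensor_tmul, assoc_tmul, mk_apply,
          LinearMap.mul'_apply, hξA, hj]
      | add x y hx hy => simp only [tmul_add, map_add, hx, hy]
    rw [ColoredYBE, NatSecond, hL, hR]
    exact (cancel_left j r hrj _ _).trans eq_comm
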